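/- Let α ∈ (1/2,1) be irrational and let N ≥ 3 be an integer. Then the number of integers q with 0 ≤ q ≤ N−1 such that {qα} ∈ [0,2α−1) equals ⌈⌊(N−1)/2⌋·(2α−1)⌉ + ⌊α + ⌊(N−2)/2⌋·(2α−1)⌋. -/

import Mathlib

open scoped Classical

/-- Indicator of `fract x < β` equals the floor increment `⌊x⌋ - ⌊x - β⌋`. -/
lemma ind_eq (x β : ℝ) (hβ0 : 0 < β) (hβ1 : β ≤ 1) :
    (if Int.fract x < β then (1:ℤ) else 0) = ⌊x⌋ - ⌊x - β⌋ := by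
  have hfl : (⌊x⌋ : ℝ) + Int.fract x = x := Int.floor_add_fract x
  have hf0 : 0 ≤ Int.fract x := Int.fract_nonneg x
  have hf1 : Int.fract x < 1 := Int.fract_lt_one x
  by_cases h : Int.fract x < β
  · have hfloor : ⌊x - β⌋ = ⌊x⌋ - 1 := by
      rw [Int.floor_eq_iff]
      constructor <;> push_cast <;> linarith
    rw [if_pos h, hfloor]; ring
  · push_neg at h
    have hfloor : ⌊x - β⌋ = ⌊x⌋ := by
      rw [Int.floor_eq_iff]
      constructor <;> push_cast <;> linarith
    rw [if_neg (not_lt.mpr h), hfloor]; ring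

lemma ceil_irr (x : ℝ) (hx : Irrational x) : ⌈x⌉ = ⌊x⌋ + 1 := by
  have h1 : ⌈x⌉ ≤ ⌊x⌋ + 1 := Int.ceil_le_floor_add_one x
  have h2 : ⌊x⌋ < ⌈x⌉ := by
    rw [Int.lt_ceil]
    exact lt_of_le_of_ne (Int.floor_le x) (Ne.symm (hx.ne_int ⌊x⌋))
  omega

lemma irr_comb (α : ℝ) (hirr : Irrational α) (a b : ℤ) (ha : a ≠ 0) :
    Irrational ((a : ℝ) * α + b) :=
  (hirr.intCast_mul ha).add_intCast b

lemma veech_sum_aux (α : ℝ) (hirr : Irrational α)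
    (h0 : 1 / 2 < α) (h1 : α < 1) (N : ℕ) (hN : 3 ≤ N) :
    (∑ q ∈ Finset.range N, if Int.fract ((q : ℕ) * α) < 2 * α - 1 then (1:ℤ) else 0)
      = ⌈(((N - 1) / 2 : ℕ) : ℝ) * (2 * α - 1)⌉
        + ⌊α + (((N - 2) / 2 : ℕ) : ℝ) * (2 * α - 1)⌋ := by
  have hβ0 : (0:ℝ) < 2 * α - 1 := by linarith
  have hβ1 : 2 * α - 1 ≤ 1 := by linarith
  induction N, hN using Nat.le_induction with
  | base =>
    have e1 : Int.fract ((1:ℝ) * α) = α := by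
      rw [one_mul, Int.fract_eq_self.mpr ⟨by linarith, by linarith⟩]
    have e2 : Int.fract ((2:ℝ) * α) = 2 * α - 1 := by
      calc Int.fract ((2:ℝ) * α) = Int.fract ((2 * α - 1) + ((1:ℤ) : ℝ)) := by
            exact congrArg Int.fract (by push_cast; ring)
        _ = Int.fract (2 * α - 1) := Int.fract_add_intCast _ _
        _ = 2 * α - 1 := Int.fract_eq_self.mpr ⟨by linarith, by linarith⟩
    have hcβ : ⌈(2 * α - 1 : ℝ)⌉ = 1 := by
      rw [Int.ceil_eq_iff]
      constructor <;> push_cast <;> linarith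
    have hfα : ⌊α⌋ = 0 := by
      rw [Int.floor_eq_iff]
      constructor <;> push_cast <;> linarith
    simp only [Finset.sum_range_succ, Finset.sum_range_zero, Nat.cast_zero, Nat.cast_one,
      Nat.cast_ofNat, zero_mul, Int.fract_zero, e1, e2]
    rw [if_pos hβ0, if_neg (by linarith : ¬ (α < 2 * α - 1)), if_neg (lt_irrefl _)]
    norm_num [hcβ, hfα]
  | succ n hn ih =>
    rw [Finset.sum_range_succ, ih]
    rcases Nat.even_or_odd n with ⟨m, hm⟩ | ⟨k, hk⟩
    · -- n = m + m, m ≥ 2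
      subst hm
      have hm2 : 2 ≤ m := by omega
      have d1 : (m + m - 1) / 2 = m - 1 := by omega
      have d2 : (m + m + 1 - 1) / 2 = m := by omega
      have d3 : (m + m - 2) / 2 = m - 1 := by omega
      have d4 : (m + m + 1 - 2) / 2 = m - 1 := by omega
      rw [d1, d2, d3, d4]
      have efr : Int.fract (((m + m : ℕ) : ℝ) * α)
          = Int.fract ((m : ℝ) * (2 * α - 1)) := by
        calc Int.fract (((m + m : ℕ) : ℝ) * α)
            = Int.fract ((m : ℝ) * (2 * α - 1) + ((m : ℤ) : ℝ)) :=
              congrArg Int.fract (by push_cast; ring)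
          _ = Int.fract ((m : ℝ) * (2 * α - 1)) := Int.fract_add_intCast _ _
      rw [efr, ind_eq _ _ hβ0 hβ1]
      have hsub : ((m - 1 : ℕ) : ℝ) = (m : ℝ) - 1 := by
        push_cast [Nat.cast_sub (by omega : 1 ≤ m)]; ring
      have irr1 : Irrational ((m : ℝ) * (2 * α - 1)) := by
        have e : ((2 * (m:ℤ) : ℤ) : ℝ) * α + ((-(m:ℤ) : ℤ) : ℝ)
            = (m : ℝ) * (2 * α - 1) := by push_cast; ring
        exact e ▸ irr_comb α hirr _ _ (by omega)
      have irr2 : Irrational (((m:ℝ) - 1) * (2 * α - 1)) := by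
        have e : ((2 * ((m:ℤ) - 1) : ℤ) : ℝ) * α + ((-((m:ℤ) - 1) : ℤ) : ℝ)
            = ((m:ℝ) - 1) * (2 * α - 1) := by push_cast; ring
        exact e ▸ irr_comb α hirr _ _ (by omega)
      rw [hsub, ceil_irr _ irr1, ceil_irr _ irr2,
        show (m : ℝ) * (2 * α - 1) - (2 * α - 1) = ((m:ℝ) - 1) * (2 * α - 1) by ring]
      ring
    · -- n = 2k + 1, k ≥ 1
      subst hk
      have hk1 : 1 ≤ k := by omega
      have d1 : (2 * k + 1 - 1) / 2 = k := by omega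
      have d2 : (2 * k + 1 + 1 - 1) / 2 = k := by omega
      have d3 : (2 * k + 1 - 2) / 2 = k - 1 := by omega
      have d4 : (2 * k + 1 + 1 - 2) / 2 = k := by omega
      rw [d1, d2, d3, d4]
      have efr : Int.fract (((2 * k + 1 : ℕ) : ℝ) * α)
          = Int.fract (α + (k : ℝ) * (2 * α - 1)) := by
        calc Int.fract (((2 * k + 1 : ℕ) : ℝ) * α)
            = Int.fract ((α + (k : ℝ) * (2 * α - 1)) + ((k : ℤ) : ℝ)) :=
              congrArg Int.fract (by push_cast; ring)
          _ = Int.fract (α + (k : ℝ) * (2 * α - 1)) := Int.fract_add_intCast _ _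
      rw [efr, ind_eq _ _ hβ0 hβ1]
      have hsub : ((k - 1 : ℕ) : ℝ) = (k : ℝ) - 1 := by
        push_cast [Nat.cast_sub hk1]; ring
      rw [hsub,
        show α + (k : ℝ) * (2 * α - 1) - (2 * α - 1)
          = α + ((k:ℝ) - 1) * (2 * α - 1) by ring]
      ring

/-- For irrational `α ∈ (1/2,1)` and `N ≥ 3`, the number of integers
`q` with `0 ≤ q ≤ N−1` such that `{qα} ∈ [0,2α−1)` equals
`⌈⌊(N−1)/2⌋·(2α−1)⌉ + ⌊α + ⌊(N−2)/2⌋·(2α−1)⌋`. -/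
theorem veech_count_case_m_eq_two_large (α : ℝ) (hirr : Irrational α)
    (h0 : 1 / 2 < α) (h1 : α < 1) (N : ℕ) (hN : 3 ≤ N) :
    (((Finset.range N).filter (fun q => Int.fract ((q : ℝ) * α) < 2 * α - 1)).card : ℤ)
      = ⌈(((N - 1) / 2 : ℕ) : ℝ) * (2 * α - 1)⌉
        + ⌊α + (((N - 2) / 2 : ℕ) : ℝ) * (2 * α - 1)⌋ := by
  have hcard : (((Finset.range N).filter
        (fun q => Int.fract ((q : ℝ) * α) < 2 * α - 1)).card : ℤ)
      = ∑ q ∈ Finset.range N, (if Int.fract ((q : ℕ) * α) < 2 * α - 1 then (1:ℤ) else 0) := by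
    have hset : (do let a ← Finset.range N; pure ((a:ℝ)) : Finset ℝ)
        = (Finset.range N).image (fun a : ℕ => (a:ℝ)) := by simp [Bind.bind]
    rw [hset, Finset.filter_image, Finset.card_image_of_injective _ Nat.cast_injective,
      Finset.card_filter, Nat.cast_sum]
    exact Finset.sum_congr rfl fun q _ => by split <;> simp
  rw [hcard]
  exact veech_sum_aux α hirr h0 h1 N hN
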